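/- Suppose X ⊆ ℝⁿ is closed convex, f is strongly convex on X with parameter θ, the constraints are linear (Ãx + b̃), the dual function d has ∇d Lipschitz with constant L̃ = σ_max(Ã)²/θ, and x̄(u) denotes the Lagrangian minimizer. Suppose a dual fast-gradient sequence (u_k) satisfies d⋆ − d(u_k) ≤ 2L̃‖u₀ − u⋆‖²/(k+1)² for k ≥ 1, where u⋆ is a dual optimum. Then ‖x̄(u_k) − x⋆‖ ≤ 2σ_max(Ã)‖u₀ − u⋆‖/(θ(k+1)) for all k ≥ 1. -/
import Mathlib


open scoped RealInnerProductSpace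

/-- Primal convergence rate of a fast dual gradient method for the linearly constrained
strongly convex problem: if the dual sequence satisfies
`d⋆ − d(u_k) ≤ 2L̃‖u₀ − u⋆‖²/(k+1)²` with `L̃ = σ_max(Ã)²/θ`, then
`‖x̄(u_k) − x⋆‖ ≤ 2σ_max(Ã)‖u₀ − u⋆‖/(θ(k+1))` for all `k ≥ 1`. -/
theorem fast_dual_gradient_primal_rate {n q : ℕ}
    (X : Set (EuclideanSpace ℝ (Fin n))) (hXcl : IsClosed X) (hXcv : Convex ℝ X)
    (f : EuclideanSpace ℝ (Fin n) → ℝ) (θ : ℝ) (hθ : 0 < θ)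
    (At : EuclideanSpace ℝ (Fin n) →L[ℝ] EuclideanSpace ℝ (Fin q))
    (bt : EuclideanSpace ℝ (Fin q))
    (d : EuclideanSpace ℝ (Fin q) → ℝ)
    (D : Set (EuclideanSpace ℝ (Fin q)))
    (xbar : EuclideanSpace ℝ (Fin q) → EuclideanSpace ℝ (Fin n))
    (xstar : EuclideanSpace ℝ (Fin n)) (hxstar : xstar ∈ X)
    (G : EuclideanSpace ℝ (Fin q) → EuclideanSpace ℝ (Fin n) → Set (EuclideanSpace ℝ (Fin n)))
    -- strong convexity of the Lagrangian `L(·,u) = f + ⟪u, Ã· + b̃⟫` on `X` with parameter `θ`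
    (hsc : ∀ u ∈ D, ∀ x ∈ X, ∀ y ∈ X, ∀ s ∈ G u x,
      (f y + ⟪u, At y + bt⟫) - (f x + ⟪u, At x + bt⟫) - ⟪s, y - x⟫ ≥ θ / 2 * ‖x - y‖ ^ 2)
    (hxbarX : ∀ u ∈ D, xbar u ∈ X)
    -- `x̄(u)` minimizes the Lagrangian over `X`, with first-order optimality
    (hmin : ∀ u ∈ D, ∀ x ∈ X,
      f (xbar u) + ⟪u, At (xbar u) + bt⟫ ≤ f x + ⟪u, At x + bt⟫)
    (hfoc : ∀ u ∈ D, ∃ s ∈ G u (xbar u), ∀ x ∈ X, 0 ≤ ⟪s, x - xbar u⟫)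
    -- dual function and zero duality gap / saddle point property
    (hd : ∀ u ∈ D, d u = f (xbar u) + ⟪u, At (xbar u) + bt⟫)
    (dstar : ℝ) (hsaddle : ∀ u ∈ D, f xstar + ⟪u, At xstar + bt⟫ ≤ dstar)
    (ustar : EuclideanSpace ℝ (Fin q)) (hustar : ustar ∈ D)
    (u : ℕ → EuclideanSpace ℝ (Fin q)) (huD : ∀ k, u k ∈ D)
    -- dual fast-gradient rate
    (hrate : ∀ k : ℕ, 1 ≤ k →
      dstar - d (u k) ≤ 2 * (‖At‖ ^ 2 / θ) * ‖u 0 - ustar‖ ^ 2 / ((k : ℝ) + 1) ^ 2) :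
    ∀ k : ℕ, 1 ≤ k →
      ‖xbar (u k) - xstar‖ ≤ 2 * ‖At‖ * ‖u 0 - ustar‖ / (θ * ((k : ℝ) + 1)) := by
  intro k hk
  obtain ⟨s, hsG, hs⟩ := hfoc (u k) (huD k)
  have hX := hxbarX (u k) (huD k)
  have h1 := hsc (u k) (huD k) (xbar (u k)) hX xstar hxstar s hsG
  have h2 := hs xstar hxstar
  have h3 := hd (u k) (huD k)
  have h4 := hsaddle (u k) (huD k)
  have h5 := hrate k hk
  set a := ‖xbar (u k) - xstar‖ with ha_def
  set c := ‖u 0 - ustar‖ with hc_def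
  set K := (k : ℝ) + 1 with hK_def
  have hK : (0:ℝ) < K := by positivity
  have hAt : (0:ℝ) ≤ ‖At‖ := norm_nonneg _
  have hc : (0:ℝ) ≤ c := norm_nonneg _
  have ha : (0:ℝ) ≤ a := norm_nonneg _
  have key : θ / 2 * a ^ 2 ≤ dstar - d (u k) := by
    rw [h3]; linarith
  have h6 : θ / 2 * a ^ 2 ≤ 2 * (‖At‖ ^ 2 / θ) * c ^ 2 / K ^ 2 := le_trans key h5
  have h7 : θ / 2 * a ^ 2 * K ^ 2 ≤ 2 * (‖At‖ ^ 2 / θ) * c ^ 2 :=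
    (le_div_iff₀ (by positivity : (0:ℝ) < K ^ 2)).mp h6
  have hB : 2 * (‖At‖ ^ 2 / θ) * c ^ 2 * θ = 2 * ‖At‖ ^ 2 * c ^ 2 := by
    field_simp
  have h7' : θ / 2 * a ^ 2 * K ^ 2 * θ ≤ 2 * ‖At‖ ^ 2 * c ^ 2 := by
    calc θ / 2 * a ^ 2 * K ^ 2 * θ ≤ 2 * (‖At‖ ^ 2 / θ) * c ^ 2 * θ :=
          mul_le_mul_of_nonneg_right h7 hθ.le
      _ = 2 * ‖At‖ ^ 2 * c ^ 2 := hB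
  have h8 : (θ * a * K) ^ 2 ≤ (2 * ‖At‖ * c) ^ 2 := by
    have e1 : (θ * a * K) ^ 2 = 2 * (θ / 2 * a ^ 2 * K ^ 2 * θ) := by ring
    have e2 : (2 * ‖At‖ * c) ^ 2 = 2 * (2 * ‖At‖ ^ 2 * c ^ 2) := by ring
    rw [e1, e2]
    linarith [h7']
  have h9 : θ * a * K ≤ 2 * ‖At‖ * c := by
    have := Real.sqrt_le_sqrt h8
    rwa [Real.sqrt_sq (by positivity), Real.sqrt_sq (by positivity)] at this
  rw [le_div_iff₀ (by positivity : (0:ℝ) < θ * K)]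
  linarith [h9]
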